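/- Let A be an M×M real matrix with eᵀA = 0 and let p : ℝ → ℝ^M be differentiable with p'(t) = A p(t) for all t and eᵀ p(0) = 1. Set b̃ = J A e_M, Ã = J A H, and p̃(t) = J p(t). Then p̃ satisfies the reduced affine differential equation p̃'(t) = b̃ + Ã p̃(t) for all t, and p(t) = e_M + H p̃(t) for all t. -/

import Mathlib

open Matrix

noncomputable def J (M : ℕ) : Matrix (Fin (M - 1)) (Fin M) ℝ :=
  Matrix.of fun i j => if (i : ℕ) = (j : ℕ) then 1 else 0

noncomputable def H (M : ℕ) : Matrix (Fin M) (Fin (M - 1)) ℝ :=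
  Matrix.of fun i j => if (i : ℕ) = (j : ℕ) then 1 else if (i : ℕ) = M - 1 then -1 else 0

noncomputable def eVec (M : ℕ) : Fin M → ℝ := fun _ => 1

noncomputable def eM (M : ℕ) : Fin M → ℝ := fun i => if (i : ℕ) = M - 1 then 1 else 0

lemma Japp (M : ℕ) (i : Fin (M-1)) (j : Fin M) :
    _root_.J M i j = if (i : ℕ) = (j : ℕ) then 1 else 0 := rfl

lemma Happ (M : ℕ) (i : Fin M) (j : Fin (M-1)) :
    _root_.H M i j = if (i : ℕ) = (j : ℕ) then 1 else if (i : ℕ) = M - 1 then -1 else 0 := rfl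

lemma Jmul (M : ℕ) (v : Fin M → ℝ) (i : Fin (M-1)) :
    (_root_.J M *ᵥ v) i = v (Fin.castLE (Nat.sub_le M 1) i) := by
  rw [mulVec, dotProduct]
  have hterm : ∀ j : Fin M, _root_.J M i j * v j
      = if j = Fin.castLE (Nat.sub_le M 1) i then v j else 0 := by
    intro j
    rw [Japp]
    by_cases h : (i:ℕ) = (j:ℕ)
    · rw [if_pos h, if_pos (by simp [Fin.ext_iff, ← h]), one_mul]
    · rw [if_neg h, if_neg (by simp [Fin.ext_iff]; omega), zero_mul]
  rw [Finset.sum_congr rfl (fun j _ => hterm j), Finset.sum_ite_eq' Finset.univ,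
    if_pos (Finset.mem_univ _)]

lemma keylem (M : ℕ) (hM : 2 ≤ M) (v : Fin M → ℝ) (hv : eVec M ⬝ᵥ v = 1) :
    v = eM M + H M *ᵥ (_root_.J M *ᵥ v) := by
  have hsum : ∑ i : Fin M, v i = 1 := by
    simpa [dotProduct, eVec] using hv
  funext i
  set w := _root_.J M *ᵥ v with hw
  have hwj : ∀ j : Fin (M-1), w j = v (Fin.castLE (Nat.sub_le M 1) j) := fun j => Jmul M v j
  have hH : (H M *ᵥ w) i = ∑ j : Fin (M-1),
      (if (i:ℕ) = (j:ℕ) then 1 else if (i:ℕ) = M - 1 then -1 else 0) * w j := by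
    rw [mulVec, dotProduct]
    exact Finset.sum_congr rfl fun j _ => by rw [Happ]
  rw [Pi.add_apply, hH]
  rcases lt_or_ge (i : ℕ) (M - 1) with hi | hi
  · have hine : (i : ℕ) ≠ M - 1 := Nat.ne_of_lt hi
    have heMi : eM M i = 0 := if_neg hine
    have hterm : ∀ j : Fin (M-1),
        (if (i:ℕ) = (j:ℕ) then (1:ℝ) else if (i:ℕ) = M - 1 then -1 else 0) * w j
        = if j = ⟨(i:ℕ), hi⟩ then w j else 0 := by
      intro j
      by_cases h : (i:ℕ) = (j:ℕ)
      · rw [if_pos h, if_pos (by simp [Fin.ext_iff, h.symm]), one_mul]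
      · rw [if_neg h, if_neg hine, if_neg (by simp [Fin.ext_iff]; omega), zero_mul]
    rw [Finset.sum_congr rfl (fun j _ => hterm j), Finset.sum_ite_eq' Finset.univ]
    rw [if_pos (Finset.mem_univ _), heMi, hwj]
    simp [Fin.ext_iff]
  · have hie : (i : ℕ) = M - 1 := le_antisymm (by omega) hi
    have heMi : eM M i = 1 := if_pos hie
    have hterm : ∀ j : Fin (M-1),
        (if (i:ℕ) = (j:ℕ) then (1:ℝ) else if (i:ℕ) = M - 1 then -1 else 0) * w j = -w j := by
      intro j
      rw [if_neg (by omega), if_pos hie, neg_one_mul]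
    rw [Finset.sum_congr rfl (fun j _ => hterm j), Finset.sum_neg_distrib, heMi]
    have hsplit : ∑ j : Fin (M-1), w j = (∑ k : Fin M, v k) - v i := by
      have h1 : ∑ j : Fin (M-1), w j
          = ∑ k ∈ Finset.range (M-1), (fun n => if h : n < M then v ⟨n, h⟩ else 0) k := by
        rw [← Fin.sum_univ_eq_sum_range]
        refine Finset.sum_congr rfl fun j _ => ?_
        rw [hwj]
        have hjM : ((j:ℕ)) < M := by omega
        simp [hjM, Fin.castLE]
      have h2 : ∑ k : Fin M, v k = ∑ k ∈ Finset.range M, (fun n => if h : n < M then v ⟨n, h⟩ else 0) k := by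
        rw [← Fin.sum_univ_eq_sum_range]
        refine Finset.sum_congr rfl fun k _ => ?_
        simp [Fin.ext_iff]
      have hM1 : M = (M-1) + 1 := by omega
      rw [h1, h2, show Finset.range M = Finset.range (M-1+1) from by rw [← hM1],
        Finset.sum_range_succ]
      have hlast : (if h : M - 1 < M then v ⟨M-1, h⟩ else 0) = v i := by
        rw [dif_pos (by omega)]
        exact congrArg v (Fin.ext hie.symm)
      rw [hlast]; ring
    rw [hsplit, hsum]; ring

theorem stmt10 (M : ℕ) (hM : 2 ≤ M) (A : Matrix (Fin M) (Fin M) ℝ)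
    (hA : eVec M ᵥ* A = 0)
    (p : ℝ → Fin M → ℝ)
    (hderiv : ∀ t : ℝ, HasDerivAt p (A *ᵥ p t) t)
    (hnorm : eVec M ⬝ᵥ p 0 = 1) :
    (∀ t : ℝ, HasDerivAt (fun s => J M *ᵥ p s)
        ((J M * A) *ᵥ eM M + (J M * A * H M) *ᵥ (J M *ᵥ p t)) t) ∧
    (∀ t : ℝ, p t = eM M + H M *ᵥ (J M *ᵥ p t)) := by
  have hcomp : ∀ t (i : Fin M), HasDerivAt (fun s => p s i) ((A *ᵥ p t) i) t :=
    fun t => hasDerivAt_pi.mp (hderiv t)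
  have hdot : ∀ t : ℝ, eVec M ⬝ᵥ p t = 1 := by
    have hc : ∀ t, HasDerivAt (fun s => eVec M ⬝ᵥ p s) 0 t := by
      intro t
      have h0 : eVec M ⬝ᵥ (A *ᵥ p t) = 0 := by
        rw [dotProduct_mulVec, hA, zero_dotProduct]
      have := HasDerivAt.fun_sum (u := Finset.univ)
        (fun i _ => ((hcomp t i).const_mul (eVec M i)))
      have heq : (fun s => eVec M ⬝ᵥ p s) = fun s => ∑ i, eVec M i * p s i := by
        funext s; rw [dotProduct]
      rw [heq]
      convert this using 1 <;> try rfl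
      rw [← h0, dotProduct]
    intro t
    have := is_const_of_deriv_eq_zero (f := fun s => eVec M ⬝ᵥ p s)
      (fun x => (hc x).differentiableAt) (fun x => (hc x).deriv) t 0
    rw [this, hnorm]
  have part2 : ∀ t : ℝ, p t = eM M + H M *ᵥ (J M *ᵥ p t) := fun t => keylem M hM (p t) (hdot t)
  refine ⟨?_, part2⟩
  intro t
  have h1 : HasDerivAt (fun s => _root_.J M *ᵥ p s) (_root_.J M *ᵥ (A *ᵥ p t)) t := by
    rw [hasDerivAt_pi]
    intro i
    have := HasDerivAt.fun_sum (u := Finset.univ)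
      (fun j _ => ((hcomp t j).const_mul (_root_.J M i j)))
    have heq : (fun s => (_root_.J M *ᵥ p s) i) = fun s => ∑ j, _root_.J M i j * p s j := by
      funext s; rw [mulVec, dotProduct]
    have hd : (_root_.J M *ᵥ (A *ᵥ p t)) i = ∑ j, _root_.J M i j * (A *ᵥ p t) j := by
      rw [mulVec, dotProduct]
    rw [heq, hd]
    exact this
  convert h1 using 1
  conv_rhs => rw [part2 t]
  simp only [mulVec_add, mulVec_mulVec, Matrix.mul_assoc]
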